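/- Fix an integer s ≥ 5 and let σ = (4s+3, 2s+1, s+1, s, 1, …, 1) with s trailing entries equal to 1. Then T^σ_{295} = 110s + 75; that is, 110s + 75 is the greatest element of {σ·α : α ∈ ℤ_{≥0}^{s+4}, Σ_j α_j(α_j+1) ≤ 590}. -/

import Mathlib

open Finset

/-- `σ` is a changemaker vector: all entries are positive and every integer `k` with
`0 ≤ k ≤ σ_0 + ⋯ + σ_n` is the sum of a subset of the entries. -/
def IsChangemaker {n : ℕ} (σ : Fin (n + 1) → ℕ) : Prop :=
  (∀ i, 0 < σ i) ∧
    ∀ k : ℕ, k ≤ ∑ i, σ i → ∃ A : Finset (Fin (n + 1)), ∑ i ∈ A, σ i = k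

/-- `Tcm σ m = T^σ_m`, the maximum of `σ·α` over all `α ∈ ℤ_{≥0}^{n+1}` with
`Σ_j α_j (α_j + 1) ≤ 2m` (the maximum exists: the set is nonempty and bounded). -/
noncomputable def Tcm {n : ℕ} (σ : Fin (n + 1) → ℕ) (m : ℕ) : ℕ :=
  sSup {t : ℕ | ∃ α : Fin (n + 1) → ℕ,
    (∑ j, α j * (α j + 1)) ≤ 2 * m ∧ t = ∑ j, σ j * α j}

/-- `Vcm σ i = V^σ_i`, the `i`-th relevant coefficient of `σ`:
the least `m` with `T^σ_m ≥ i` (and `V^σ_0 = 0`). -/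
noncomputable def Vcm {n : ℕ} (σ : Fin (n + 1) → ℕ) (i : ℕ) : ℕ :=
  sInf {m : ℕ | i ≤ Tcm σ m}

lemma qb_aux (x k : ℕ) : (2*k+2)*x ≤ k*(k+1) + x*(x+1) := by
  rcases le_or_gt x k with h|h <;> nlinarith

lemma twox_aux (x : ℕ) : 2*x ≤ x*(x+1) := by
  cases x with
  | zero => simp
  | succ n => exact le_trans (by omega) (Nat.mul_le_mul_left (n+1) (show 2 ≤ n+2 by omega))

lemma key_aux (a b c d : ℕ) (h : a*(a+1)+b*(b+1)+c*(c+1)+d*(d+1) ≤ 590) :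
    4*a+2*b+c+d ≤ 110 ∧
    46*a+22*b+12*c+10*d ≤ 660 + (a*(a+1)+b*(b+1)+c*(c+1)+d*(d+1)) := by
  constructor
  · have h1 : 40*a+20*b+10*c+10*d ≤ 1100 := by
      linarith [qb_aux a 19, qb_aux b 9, qb_aux c 4, qb_aux d 4]
    omega
  · by_contra hP
    push_neg at hP
    have qa := qb_aux a 22
    have qbb := qb_aux b 10
    have qc := qb_aux c 5
    have qd := qb_aux d 4
    have ha1 : 21 ≤ a := by
      have : 81 ≤ 4*a := by linarith [qb_aux a 20]
      omega
    have ha2 : a ≤ 24 := by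
      have : 6*a ≤ 149 := by linarith [qb_aux a 25]
      omega
    have hb1 : 9 ≤ b := by
      have : 33 ≤ 4*b := by linarith [qb_aux b 8]
      omega
    have hb2 : b ≤ 12 := by
      have : 4*b ≤ 51 := by linarith [qb_aux b 12]
      omega
    have hc1 : 4 ≤ c := by
      have : 13 ≤ 4*c := by linarith [qb_aux c 3]
      omega
    have hc2 : c ≤ 7 := by
      have : 4*c ≤ 31 := by linarith [qb_aux c 7]
      omega
    have hd1 : 3 ≤ d := by
      have : 9 ≤ 4*d := by linarith [qb_aux d 2]
      omega
    have hd2 : d ≤ 6 := by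
      have : 4*d ≤ 27 := by linarith [qb_aux d 6]
      omega
    interval_cases a <;> interval_cases b <;> interval_cases c <;> interval_cases d <;> omega

theorem stmt_14 (s : ℕ) (hs : 5 ≤ s) (σ : Fin (s + 3 + 1) → ℕ)
    (hσ : σ = fun j : Fin (s + 3 + 1) => if j.val = 0 then 4 * s + 3
      else if j.val = 1 then 2 * s + 1
      else if j.val = 2 then s + 1
      else if j.val = 3 then s else 1) :
    Tcm σ 295 = 110 * s + 75 := by
  subst hσ
  have h23 : Fin.succ (2 : Fin (s + 2 + 1)) = (3 : Fin (s + 3 + 1)) := rfl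
  have peelCost : ∀ α : Fin (s + 3 + 1) → ℕ,
      ∑ j, α j * (α j + 1) = α 0 * (α 0 + 1) + α 1 * (α 1 + 1) + α 2 * (α 2 + 1)
        + α 3 * (α 3 + 1)
        + ∑ j : Fin s, α j.succ.succ.succ.succ * (α j.succ.succ.succ.succ + 1) := by
    intro α
    simp [Fin.sum_univ_succ, h23]
    ring
  have peelVal : ∀ α : Fin (s + 3 + 1) → ℕ,
      ∑ j, (if (j : Fin (s+3+1)).val = 0 then 4 * s + 3
        else if j.val = 1 then 2 * s + 1
        else if j.val = 2 then s + 1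
        else if j.val = 3 then s else 1) * α j
      = (4*s+3) * α 0 + (2*s+1) * α 1 + (s+1) * α 2 + s * α 3
        + ∑ j : Fin s, α j.succ.succ.succ.succ := by
    intro α
    simp [Fin.sum_univ_succ, h23]
    ring
  have hub : ∀ t ∈ {t : ℕ | ∃ α : Fin (s + 3 + 1) → ℕ,
      (∑ j, α j * (α j + 1)) ≤ 2 * 295 ∧
      t = ∑ j, (if (j : Fin (s+3+1)).val = 0 then 4 * s + 3
        else if j.val = 1 then 2 * s + 1
        else if j.val = 2 then s + 1
        else if j.val = 3 then s else 1) * α j}, t ≤ 110 * s + 75 := by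
    rintro t ⟨α, hcost, rfl⟩
    rw [peelCost] at hcost
    rw [peelVal]
    set a := α 0 with ha
    set b := α 1 with hb
    set c := α 2 with hc
    set d := α 3 with hd
    set e := ∑ j : Fin s, α j.succ.succ.succ.succ with he
    have h2e : 2 * e ≤ ∑ j : Fin s, α j.succ.succ.succ.succ * (α j.succ.succ.succ.succ + 1) := by
      rw [he, Finset.mul_sum]
      exact Finset.sum_le_sum fun j _ => twox_aux _
    have hQ : a*(a+1)+b*(b+1)+c*(c+1)+d*(d+1) ≤ 590 := by omega
    obtain ⟨hK, hP⟩ := key_aux a b c d hQ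
    have hPe : 23*a+11*b+6*c+5*d+e ≤ 625 := by omega
    obtain ⟨u, rfl⟩ : ∃ u, s = u + 5 := ⟨s - 5, by omega⟩
    have hu : u * (4*a+2*b+c+d) ≤ u * 110 := Nat.mul_le_mul_left u hK
    nlinarith [hu, hPe]
  rw [Tcm]
  apply le_antisymm
  · apply csSup_le
    · exact ⟨0, fun _ => 0, by simp⟩
    · exact hub
  · apply le_csSup ⟨110 * s + 75, hub⟩
    refine ⟨fun j => if j.val = 0 then 20 else if j.val = 1 then 10
      else if j.val = 2 then 5 else if j.val = 3 then 5 else 0, ?_, ?_⟩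
    · rw [peelCost]
      have hv2 : ((2 : Fin (s+3+1)) : ℕ) = 2 := rfl
      have hv3 : ((3 : Fin (s+3+1)) : ℕ) = 3 := rfl
      simp [Fin.val_succ, hv2, hv3, Nat.mod_eq_of_lt (show 2 < s+3+1 by omega), Nat.mod_eq_of_lt (show 3 < s+3+1 by omega)]
    · rw [peelVal]
      have hv2 : ((2 : Fin (s+3+1)) : ℕ) = 2 := rfl
      have hv3 : ((3 : Fin (s+3+1)) : ℕ) = 3 := rfl
      simp [Fin.val_succ, hv2, hv3, Nat.mod_eq_of_lt (show 2 < s+3+1 by omega), Nat.mod_eq_of_lt (show 3 < s+3+1 by omega)]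
      ring
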